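/- Let A₁ = P₁ − R₁ + S₁ be a convergent double weak splitting of type I of a symmetric nonsingular matrix A₁ ∈ ℝ^{n×n}, with iteration matrix Ŵ₁ = [[P₁⁻¹R₁, −P₁⁻¹S₁],[I, 0]], and let A₂ = P₂ − R₂ + S₂ be a convergent double weak splitting of type II of a symmetric nonsingular matrix A₂ ∈ ℝ^{n×n}, with iteration matrix W̃₂ = [[(R₂P₂⁻¹)ᵀ, −(S₂P₂⁻¹)ᵀ],[I, 0]]. If (R₂P₂⁻¹)ᵀ ≤ P₁⁻¹R₁ and (P₂⁻¹)ᵀA₂ ≤ P₁⁻¹A₁, then ρ(Ŵ₁) ≤ ρ(W̃₂) < 1. -/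

import Mathlib

open Matrix Filter Topology
open scoped ENNReal NNReal

/-- The spectral radius of a real square matrix: the maximum (supremum) of the
moduli of its complex eigenvalues. -/
noncomputable def specRad {n : Type*} [Fintype n] [DecidableEq n]
    (B : Matrix n n ℝ) : ℝ :=
  sSup ((fun z : ℂ => ‖z‖) '' spectrum ℂ (B.map Complex.ofReal))

/-- Entrywise order on real matrices: `entryLE A B` means every entry of `A` is
at most the corresponding entry of `B`. -/
def entryLE {m n : Type*} (A B : Matrix m n ℝ) : Prop :=
  ∀ i j, A i j ≤ B i j

/-- `X` is the Moore–Penrose inverse of `A`. -/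
def IsMoorePenrose {m n : Type*} [Fintype m] [Fintype n]
    (A : Matrix m n ℝ) (X : Matrix n m ℝ) : Prop :=
  A * X * A = A ∧ X * A * X = X ∧ (A * X)ᵀ = A * X ∧ (X * A)ᵀ = X * A

/-- Iteration matrix of a double weak splitting of type II:
`W̃ = [[(RP⁻¹)ᵀ, −(SP⁻¹)ᵀ],[I, 0]]`. -/
noncomputable def itMatII {n : Type*} [Fintype n] [DecidableEq n]
    (P R S : Matrix n n ℝ) : Matrix (n ⊕ n) (n ⊕ n) ℝ :=
  Matrix.fromBlocks ((R * P⁻¹)ᵀ) (-((S * P⁻¹)ᵀ)) 1 0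

/-- Iteration matrix of a double weak splitting of type I:
`Ŵ = [[P⁻¹R, −P⁻¹S],[I, 0]]`. -/
noncomputable def itMatI {n : Type*} [Fintype n] [DecidableEq n]
    (P R S : Matrix n n ℝ) : Matrix (n ⊕ n) (n ⊕ n) ℝ :=
  Matrix.fromBlocks (P⁻¹ * R) (-(P⁻¹ * S)) 1 0


lemma specRad_nonneg {m : Type*} [Fintype m] [DecidableEq m] (B : Matrix m m ℝ) :
    0 ≤ specRad B := by
  rcases (spectrum ℂ (B.map Complex.ofReal)).eq_empty_or_nonempty with h | ⟨μ, hμ⟩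
  · simp [specRad, h, Real.sSup_empty]
  · exact le_trans (norm_nonneg μ)
      (le_csSup ((B.map Complex.ofReal).finite_spectrum.image _).bddAbove ⟨μ, hμ, rfl⟩)

lemma abs_le_specRad {m : Type*} [Fintype m] [DecidableEq m] {B : Matrix m m ℝ} {μ : ℂ}
    (hμ : μ ∈ spectrum ℂ (B.map Complex.ofReal)) : ‖μ‖ ≤ specRad B :=
  le_csSup ((B.map Complex.ofReal).finite_spectrum.image _).bddAbove ⟨μ, hμ, rfl⟩

lemma exists_abs_eq_specRad {m : Type*} [Fintype m] [DecidableEq m] [Nonempty m]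
    (B : Matrix m m ℝ) :
    ∃ μ ∈ spectrum ℂ (B.map Complex.ofReal), ‖μ‖ = specRad B := by
  have hne : (spectrum ℂ (B.map Complex.ofReal)).Nonempty := by
    obtain ⟨μ, hμ⟩ := Module.End.exists_eigenvalue
      (Matrix.toLinAlgEquiv' (B.map Complex.ofReal) : Module.End ℂ (m → ℂ))
    have h2 := hμ.mem_spectrum
    have h3 : spectrum ℂ ((Matrix.toLinAlgEquiv' : Matrix m m ℂ ≃ₐ[ℂ] _) (B.map Complex.ofReal))
        = spectrum ℂ (B.map Complex.ofReal) :=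
      AlgEquiv.spectrum_eq (Matrix.toLinAlgEquiv' : Matrix m m ℂ ≃ₐ[ℂ] _) _
    exact ⟨μ, h3 ▸ h2⟩
  have hfin : ((fun z : ℂ => ‖z‖) '' spectrum ℂ (B.map Complex.ofReal)).Finite :=
    (B.map Complex.ofReal).finite_spectrum.image _
  have hmem := (hne.image (fun z : ℂ => ‖z‖)).csSup_mem hfin
  obtain ⟨μ, hμ, habs⟩ := hmem
  exact ⟨μ, hμ, habs⟩

lemma exists_eigenvec {m : Type*} [Fintype m] [DecidableEq m] {M : Matrix m m ℂ} {μ : ℂ}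
    (h : μ ∈ spectrum ℂ M) : ∃ v, v ≠ 0 ∧ M.mulVec v = μ • v := by
  rw [spectrum.mem_iff] at h
  have hdet : (algebraMap ℂ (Matrix m m ℂ) μ - M).det = 0 := by
    by_contra hd
    exact h ((Matrix.isUnit_iff_isUnit_det _).2 (isUnit_iff_ne_zero.2 hd))
  obtain ⟨v, hv0, hv⟩ := (Matrix.exists_mulVec_eq_zero_iff).2 hdet
  refine ⟨v, hv0, ?_⟩
  rw [Matrix.sub_mulVec] at hv
  have h1 : (algebraMap ℂ (Matrix m m ℂ) μ) *ᵥ v = μ • v := by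
    rw [Algebra.algebraMap_eq_smul_one, Matrix.smul_mulVec, Matrix.one_mulVec]
  rw [h1] at hv
  have := sub_eq_zero.mp hv
  exact this.symm

section sub
variable {m : Type*} [Fintype m] [DecidableEq m]

lemma map_pow_ofReal (B : Matrix m m ℝ) (k : ℕ) :
    (B ^ k).map Complex.ofReal = (B.map Complex.ofReal) ^ k := by
  have : ∀ C : Matrix m m ℝ, C.map Complex.ofReal = Complex.ofRealHom.mapMatrix C :=
    fun C => rfl
  rw [this, this, map_pow]

lemma le_specRad_of_subsolution (B : Matrix m m ℝ)
    (hB : ∀ i j, 0 ≤ B i j) {u : m → ℝ} (hu : ∀ i, 0 ≤ u i) {i0 : m} (hi0 : 0 < u i0)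
    {s : ℝ} (hs : 0 ≤ s) (hsub : ∀ i, s * u i ≤ B.mulVec u i) :
    s ≤ specRad B := by
  rcases hs.eq_or_lt with rfl | hs
  · exact specRad_nonneg B
  -- entrywise nonnegativity of powers
  have hposk : ∀ k : ℕ, ∀ i j, 0 ≤ (B ^ k) i j := by
    intro k
    induction k with
    | zero => intro i j; by_cases h : i = j <;> simp [Matrix.one_apply, h]
    | succ k ih =>
      intro i j
      rw [pow_succ, Matrix.mul_apply]
      exact Finset.sum_nonneg fun l _ => mul_nonneg (ih i l) (hB l j)
  have hmono : ∀ (C : Matrix m m ℝ), (∀ i j, 0 ≤ C i j) → ∀ x y : m → ℝ,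
      (∀ i, x i ≤ y i) → ∀ i, C.mulVec x i ≤ C.mulVec y i := by
    intro C hC x y hxy i
    exact Finset.sum_le_sum fun j _ => mul_le_mul_of_nonneg_left (hxy j) (hC i j)
  -- powers subsolution
  have hpow : ∀ k : ℕ, ∀ i, s ^ k * u i ≤ (B ^ k).mulVec u i := by
    intro k
    induction k with
    | zero => intro i; simp [Matrix.one_mulVec]
    | succ k ih =>
      intro i
      have h1 : (B ^ (k + 1)).mulVec u i = (B ^ k).mulVec (B.mulVec u) i := by
        rw [pow_succ, ← Matrix.mulVec_mulVec]
      have h2 : (B ^ k).mulVec (s • u) i ≤ (B ^ k).mulVec (B.mulVec u) i :=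
        hmono _ (hposk k) _ _ (fun j => by simpa [smul_eq_mul] using hsub j) i
      have h3 : (B ^ k).mulVec (s • u) i = s * ((B ^ k).mulVec u i) := by
        rw [Matrix.mulVec_smul]; simp [smul_eq_mul]
      have h4 : s ^ (k + 1) * u i = s * (s ^ k * u i) := by ring
      calc s ^ (k+1) * u i = s * (s ^ k * u i) := h4
        _ ≤ s * ((B ^ k).mulVec u i) := mul_le_mul_of_nonneg_left (ih i) hs.le
        _ = (B ^ k).mulVec (s • u) i := h3.symm
        _ ≤ (B ^ k).mulVec (B.mulVec u) i := h2
        _ = (B ^ (k + 1)).mulVec u i := h1.symm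
  -- pass to the CLM on Euclidean space
  set Bc := B.map Complex.ofReal with hBc
  set a := Matrix.toEuclideanCLM (𝕜 := ℂ) Bc with ha
  set x : EuclideanSpace ℂ m := (WithLp.equiv 2 (m → ℂ)).symm (fun j => (u j : ℂ)) with hx
  -- component bound on Euclidean space
  have hcomp : ∀ (y : EuclideanSpace ℂ m) (i : m), ‖y i‖ ≤ ‖y‖ := by
    intro y i
    rw [EuclideanSpace.norm_eq]
    have h1 : ‖y i‖ = Real.sqrt (‖y i‖ ^ 2) := by
      rw [Real.sqrt_sq (norm_nonneg _)]
    rw [h1]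
    apply Real.sqrt_le_sqrt
    exact Finset.single_le_sum (f := fun j => ‖y j‖ ^ 2)
      (fun j _ => sq_nonneg _) (Finset.mem_univ i)
  have hxpos : 0 < ‖x‖ := by
    have := hcomp x i0
    have hxi : ‖x i0‖ = u i0 := by
      simp [hx, WithLp.equiv_symm_apply, PiLp.toLp_apply, Complex.norm_real, Real.norm_eq_abs,
        abs_of_nonneg (hu i0)]
    nlinarith [hi0]
  -- norm lower bound
  have hnorm : ∀ k : ℕ, s ^ k * u i0 ≤ ‖a ^ k‖ * ‖x‖ := by
    intro k
    have hak : (a ^ k) x = (WithLp.equiv 2 (m → ℂ)).symm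
        (((B ^ k).map Complex.ofReal).mulVec (fun j => (u j : ℂ))) := by
      rw [ha, ← map_pow, ← map_pow_ofReal, hx]
      rw [WithLp.equiv_symm_apply, Matrix.toEuclideanCLM_toLp]
    have hcomp2 : ((a ^ k) x) i0 = (((B ^ k).mulVec u i0 : ℝ) : ℂ) := by
      rw [hak, WithLp.equiv_symm_apply, PiLp.toLp_apply]
      simp [Matrix.mulVec, dotProduct, Matrix.map_apply]
    calc s ^ k * u i0 ≤ (B ^ k).mulVec u i0 := hpow k i0
      _ = ‖((a ^ k) x) i0‖ := by
          rw [hcomp2, Complex.norm_real, Real.norm_eq_abs, abs_of_nonneg]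
          exact Finset.sum_nonneg fun j _ => mul_nonneg (hposk k i0 j) (hu j)
      _ ≤ ‖(a ^ k) x‖ := hcomp _ i0
      _ ≤ ‖a ^ k‖ * ‖x‖ := (a ^ k).le_opNorm x
  set c0 : ℝ := u i0 / ‖x‖ with hc0def
  have hc0 : 0 < c0 := div_pos hi0 hxpos
  have hnorm' : ∀ k : ℕ, s ^ k * c0 ≤ ‖a ^ k‖ := by
    intro k
    rw [hc0def, mul_div_assoc']
    rw [div_le_iff₀ hxpos]
    exact hnorm k
  -- Gelfand's formula
  have hG := spectrum.pow_nnnorm_pow_one_div_tendsto_nhds_spectralRadius a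
  have hev : ∀ᶠ (k : ℕ) in atTop,
      ENNReal.ofReal (s * c0 ^ (1 / (k : ℝ))) ≤ (‖a ^ k‖₊ : ℝ≥0∞) ^ (1 / (k : ℝ)) := by
    filter_upwards [eventually_ge_atTop 1] with k hk
    have hkR : (0:ℝ) < (k : ℝ) := by exact_mod_cast hk
    have h1 : ENNReal.ofReal (s ^ k * c0) ≤ (‖a ^ k‖₊ : ℝ≥0∞) := by
      rw [← enorm_eq_nnnorm, ← ofReal_norm]
      exact ENNReal.ofReal_le_ofReal (hnorm' k)
    have h2 := ENNReal.rpow_le_rpow h1 (by positivity : (0:ℝ) ≤ 1 / (k : ℝ))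
    have h3 : (ENNReal.ofReal (s ^ k * c0)) ^ (1 / (k : ℝ))
        = ENNReal.ofReal ((s ^ k * c0) ^ (1 / (k : ℝ))) :=
      ENNReal.ofReal_rpow_of_pos (by positivity)
    have h4 : (s ^ k * c0) ^ (1 / (k : ℝ)) = s * c0 ^ (1 / (k : ℝ)) := by
      rw [Real.mul_rpow (by positivity) hc0.le]
      congr 1
      rw [← Real.rpow_natCast s k, ← Real.rpow_mul hs.le]
      rw [mul_one_div, div_self (ne_of_gt hkR), Real.rpow_one]
    rw [h3, h4] at h2
    exact h2
  have hlim : Tendsto (fun k : ℕ => ENNReal.ofReal (s * c0 ^ (1 / (k : ℝ)))) atTop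
      (𝓝 (ENNReal.ofReal s)) := by
    have h1 : Tendsto (fun k : ℕ => c0 ^ (1 / (k : ℝ))) atTop (𝓝 1) := by
      have h2 := (Real.continuousAt_const_rpow (a := c0) (b := 0)
        (ne_of_gt hc0)).tendsto.comp tendsto_one_div_atTop_nhds_zero_nat
      simpa [Real.rpow_zero, Function.comp_def] using h2
    have h3 : Tendsto (fun k : ℕ => s * c0 ^ (1 / (k : ℝ))) atTop (𝓝 s) := by
      simpa using h1.const_mul s
    exact (ENNReal.continuous_ofReal.tendsto s).comp h3
  have hle : ENNReal.ofReal s ≤ spectralRadius ℂ a :=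
    le_of_tendsto_of_tendsto hlim hG hev
  -- transfer to specRad
  have hspec : spectrum ℂ a = spectrum ℂ Bc :=
    AlgEquiv.spectrum_eq (Matrix.toEuclideanCLM (𝕜 := ℂ) (n := m)) Bc
  have hup : spectralRadius ℂ a ≤ ENNReal.ofReal (specRad B) := by
    rw [spectralRadius]
    refine iSup₂_le fun μ hμ => ?_
    rw [hspec] at hμ
    have h := abs_le_specRad (B := B) (μ := μ) hμ
    calc ((‖μ‖₊ : ℝ≥0) : ℝ≥0∞) = ENNReal.ofReal ‖μ‖ := by rw [ofReal_norm, enorm_eq_nnnorm]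
      _ ≤ ENNReal.ofReal (specRad B) :=
          ENNReal.ofReal_le_ofReal (by exact h)
  exact (ENNReal.ofReal_le_ofReal_iff (specRad_nonneg B)).1 (hle.trans hup)

end sub

theorem stmt15 {n : ℕ} (A₁ P₁ R₁ S₁ A₂ P₂ R₂ S₂ : Matrix (Fin n) (Fin n) ℝ)
    (hAsym₁ : A₁ᵀ = A₁) (hAinv₁ : IsUnit A₁.det)
    (hAsym₂ : A₂ᵀ = A₂) (hAinv₂ : IsUnit A₂.det)
    -- `A₁ = P₁ − R₁ + S₁` is a double weak splitting of type I
    (hsplit₁ : A₁ = P₁ - R₁ + S₁) (hPinv₁ : IsUnit P₁.det)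
    (hRP₁ : entryLE 0 (P₁⁻¹ * R₁)) (hSP₁ : entryLE 0 (-(P₁⁻¹ * S₁)))
    -- `A₂ = P₂ − R₂ + S₂` is a double weak splitting of type II
    (hsplit₂ : A₂ = P₂ - R₂ + S₂) (hPinv₂ : IsUnit P₂.det)
    (hRP₂ : entryLE 0 (R₂ * P₂⁻¹)) (hSP₂ : entryLE 0 (-(S₂ * P₂⁻¹)))
    -- both splittings are convergent
    (hconv₁ : specRad (itMatI P₁ R₁ S₁) < 1)
    (hconv₂ : specRad (itMatII P₂ R₂ S₂) < 1)
    -- `(R₂P₂⁻¹)ᵀ ≤ P₁⁻¹R₁` and `(P₂⁻¹)ᵀA₂ ≤ P₁⁻¹A₁`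
    (hR : entryLE ((R₂ * P₂⁻¹)ᵀ) (P₁⁻¹ * R₁))
    (hAP : entryLE ((P₂⁻¹)ᵀ * A₂) (P₁⁻¹ * A₁)) :
    specRad (itMatI P₁ R₁ S₁) ≤ specRad (itMatII P₂ R₂ S₂) ∧
      specRad (itMatII P₂ R₂ S₂) < 1 := by
  refine ⟨?_, hconv₂⟩
  rcases Nat.eq_zero_or_pos n with hn | hn
  · subst hn
    have hz : ∀ (X : Matrix (Fin 0 ⊕ Fin 0) (Fin 0 ⊕ Fin 0) ℝ), specRad X = 0 := by
      intro X
      have hsp : spectrum ℂ (X.map Complex.ofReal) = ∅ := by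
        ext μ
        simp only [Set.mem_empty_iff_false, iff_false]
        intro hμ
        rw [spectrum.mem_iff] at hμ
        exact hμ (isUnit_of_subsingleton _)
      simp [specRad, hsp, Real.sSup_empty]
    rw [hz, hz]
  · have hne : Nonempty (Fin n) := Fin.pos_iff_nonempty.mp hn
    have hneS : Nonempty (Fin n ⊕ Fin n) := ⟨Sum.inl ⟨0, hn⟩⟩
    -- abbreviations
    set M1 : Matrix (Fin n) (Fin n) ℝ := P₁⁻¹ * R₁ with hM1
    set K1 : Matrix (Fin n) (Fin n) ℝ := -(P₁⁻¹ * S₁) with hK1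
    set Mh : Matrix (Fin n) (Fin n) ℝ := (R₂ * P₂⁻¹)ᵀ with hMh
    set Kh : Matrix (Fin n) (Fin n) ℝ := -((S₂ * P₂⁻¹)ᵀ) with hKh
    -- entrywise nonnegativity
    have M1nn : ∀ i j, 0 ≤ M1 i j := fun i j => by simpa using hRP₁ i j
    have K1nn : ∀ i j, 0 ≤ K1 i j := fun i j => by simpa using hSP₁ i j
    have Mhnn : ∀ i j, 0 ≤ Mh i j := fun i j => by
      rw [hMh, Matrix.transpose_apply]
      simpa using hRP₂ j i
    have Khnn : ∀ i j, 0 ≤ Kh i j := fun i j => by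
      rw [hKh, Matrix.neg_apply, Matrix.transpose_apply]
      simpa [Matrix.neg_apply] using hSP₂ j i
    have hRle : ∀ i j, Mh i j ≤ M1 i j := fun i j => hR i j
    -- identities for the sum comparison
    have hid1 : P₁⁻¹ * A₁ = 1 - M1 - K1 := by
      rw [hsplit₁, mul_add, mul_sub, Matrix.nonsing_inv_mul _ hPinv₁, hM1, hK1]
      abel
    have hid2 : (P₂⁻¹)ᵀ * A₂ = 1 - Mh - Kh := by
      calc (P₂⁻¹)ᵀ * A₂ = (P₂⁻¹)ᵀ * A₂ᵀ := by rw [hAsym₂]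
        _ = (A₂ * P₂⁻¹)ᵀ := (Matrix.transpose_mul _ _).symm
        _ = ((P₂ - R₂ + S₂) * P₂⁻¹)ᵀ := by rw [← hsplit₂]
        _ = (1 - R₂ * P₂⁻¹ + S₂ * P₂⁻¹)ᵀ := by
            rw [add_mul, sub_mul, Matrix.mul_nonsing_inv _ hPinv₂]
        _ = 1 - Mh - Kh := by
            rw [Matrix.transpose_add, Matrix.transpose_sub, Matrix.transpose_one, hMh, hKh]
            abel
    have hsum : ∀ i j, M1 i j + K1 i j ≤ Mh i j + Kh i j := by
      intro i j
      have h := hAP i j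
      rw [hid1, hid2] at h
      simp only [Matrix.sub_apply] at h
      linarith
    -- eigenvalue / eigenvector of the type I iteration matrix
    obtain ⟨μ, hμmem, hμabs⟩ := exists_abs_eq_specRad (itMatI P₁ R₁ S₁)
    obtain ⟨v, hv0, hveq⟩ := exists_eigenvec hμmem
    set s : ℝ := specRad (itMatI P₁ R₁ S₁) with hsdef
    have hs0 : 0 ≤ s := hμabs ▸ norm_nonneg μ
    have hs1 : s ≤ 1 := hconv₁.le
    -- block structure
    have hB1 : itMatI P₁ R₁ S₁ = Matrix.fromBlocks M1 K1 1 0 := rfl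
    have hB1c : (itMatI P₁ R₁ S₁).map Complex.ofReal =
        Matrix.fromBlocks (M1.map Complex.ofReal) (K1.map Complex.ofReal) 1 0 := by
      rw [hB1, Matrix.fromBlocks_map,
        Matrix.map_one _ Complex.ofReal_zero Complex.ofReal_one,
        Matrix.map_zero _ Complex.ofReal_zero]
    set v1 : Fin n → ℂ := fun i => v (Sum.inl i) with hv1
    set v2 : Fin n → ℂ := fun i => v (Sum.inr i) with hv2
    have hvelim : v = Sum.elim v1 v2 := by funext i; cases i <;> rfl
    rw [hB1c, hvelim, Matrix.fromBlocks_mulVec] at hveq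
    have hrow2 : ∀ i, v1 i = μ * v2 i := by
      intro i
      have h := congrFun hveq (Sum.inr i)
      simpa [Matrix.one_mulVec, Matrix.zero_mulVec, smul_eq_mul] using h
    have hrow1 : ∀ i, ((M1.map Complex.ofReal).mulVec v1) i
        + ((K1.map Complex.ofReal).mulVec v2) i = μ * v1 i := by
      intro i
      have h := congrFun hveq (Sum.inl i)
      simpa [smul_eq_mul] using h
    -- v2 is nonzero
    have hv2ne : v2 ≠ 0 := by
      intro h
      apply hv0
      funext i
      cases i with
      | inl i =>
          have : v1 i = μ * v2 i := hrow2 i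
          rw [congrFun h i] at this
          simpa using this
      | inr i => exact congrFun h i
    obtain ⟨i0, hi0⟩ := Function.ne_iff.mp hv2ne
    set u : Fin n → ℝ := fun i => ‖v2 i‖ with hudef
    have hu : ∀ i, 0 ≤ u i := fun i => norm_nonneg _
    have hui0 : 0 < u i0 := by
      simp only [hudef]
      exact (norm_pos_iff).mpr (by simpa using hi0)
    -- the key pointwise inequality
    have hkey : ∀ i, s * (s * u i) ≤ s * ((Mh.mulVec u) i) + ((Kh.mulVec u) i) := by
      intro i
      have hC : (μ * μ) * v2 i
          = ∑ j, (((M1 i j : ℝ) : ℂ) * μ + ((K1 i j : ℝ) : ℂ)) * v2 j := by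
        have h1 := hrow1 i
        simp only [Matrix.mulVec, dotProduct, Matrix.map_apply] at h1
        have h2 : ∑ j, ((M1 i j : ℝ) : ℂ) * v1 j
            = ∑ j, ((M1 i j : ℝ) : ℂ) * (μ * v2 j) :=
          Finset.sum_congr rfl fun j _ => by rw [hrow2 j]
        calc (μ * μ) * v2 i = μ * (μ * v2 i) := by ring
          _ = μ * v1 i := by rw [← hrow2 i]
          _ = ∑ j, ((M1 i j : ℝ) : ℂ) * v1 j + ∑ j, ((K1 i j : ℝ) : ℂ) * v2 j := h1.symm
          _ = ∑ j, ((M1 i j : ℝ) : ℂ) * (μ * v2 j) + ∑ j, ((K1 i j : ℝ) : ℂ) * v2 j := by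
              rw [h2]
          _ = ∑ j, (((M1 i j : ℝ) : ℂ) * μ + ((K1 i j : ℝ) : ℂ)) * v2 j := by
              rw [← Finset.sum_add_distrib]
              exact Finset.sum_congr rfl fun j _ => by ring
      have habs : s * (s * u i) ≤ ∑ j, (s * M1 i j + K1 i j) * u j := by
        have h3 : s * (s * u i) = ‖(μ * μ) * v2 i‖ := by
          simp only [norm_mul, hudef, hμabs]
          ring
        rw [h3, hC]
        calc ‖∑ j, (((M1 i j : ℝ) : ℂ) * μ + ((K1 i j : ℝ) : ℂ)) * v2 j‖
            ≤ ∑ j, ‖(((M1 i j : ℝ) : ℂ) * μ + ((K1 i j : ℝ) : ℂ)) * v2 j‖ :=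
              norm_sum_le _ _
          _ ≤ ∑ j, (s * M1 i j + K1 i j) * u j := by
              refine Finset.sum_le_sum fun j _ => ?_
              rw [norm_mul]
              refine mul_le_mul_of_nonneg_right ?_ (hu j)
              calc ‖((M1 i j : ℝ) : ℂ) * μ + ((K1 i j : ℝ) : ℂ)‖
                  ≤ ‖((M1 i j : ℝ) : ℂ) * μ‖ + ‖((K1 i j : ℝ) : ℂ)‖ :=
                    norm_add_le _ _
                _ = M1 i j * s + K1 i j := by
                    rw [norm_mul, Complex.norm_real, Complex.norm_real, Real.norm_eq_abs, Real.norm_eq_abs,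
                      abs_of_nonneg (M1nn i j), abs_of_nonneg (K1nn i j), hμabs]
                _ = s * M1 i j + K1 i j := by ring
      have hcmp : ∑ j, (s * M1 i j + K1 i j) * u j ≤ ∑ j, (s * Mh i j + Kh i j) * u j := by
        refine Finset.sum_le_sum fun j _ => ?_
        refine mul_le_mul_of_nonneg_right ?_ (hu j)
        nlinarith [hRle i j, hsum i j]
      have hfin : ∑ j, (s * Mh i j + Kh i j) * u j
          = s * ((Mh.mulVec u) i) + ((Kh.mulVec u) i) := by
        simp only [Matrix.mulVec, dotProduct, Finset.mul_sum]
        rw [← Finset.sum_add_distrib]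
        exact Finset.sum_congr rfl fun j _ => by ring
      linarith [habs, hcmp, hfin.le, hfin.ge]
    -- build the subsolution of the type II iteration matrix
    have hB2 : itMatII P₂ R₂ S₂ = Matrix.fromBlocks Mh Kh 1 0 := rfl
    have hB2nn : ∀ p q, 0 ≤ itMatII P₂ R₂ S₂ p q := by
      rintro (i | i) (j | j)
      · simpa [hB2] using Mhnn i j
      · simpa [hB2] using Khnn i j
      · rw [hB2]
        simp only [Matrix.fromBlocks_apply₂₁, Matrix.one_apply]
        split <;> norm_num
      · simp [hB2]
    set w : (Fin n ⊕ Fin n) → ℝ := Sum.elim (fun i => s * u i) u with hwdef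
    have hwnn : ∀ p, 0 ≤ w p := by
      rintro (i | i)
      · exact mul_nonneg hs0 (hu i)
      · exact hu i
    have hwpos : 0 < w (Sum.inr i0) := hui0
    have hsubs : ∀ p, s * w p ≤ ((itMatII P₂ R₂ S₂).mulVec w) p := by
      have hmv : (itMatII P₂ R₂ S₂).mulVec w
          = Sum.elim (Mh.mulVec (fun i => s * u i) + Kh.mulVec u)
            ((1 : Matrix (Fin n) (Fin n) ℝ).mulVec (fun i => s * u i)
              + (0 : Matrix (Fin n) (Fin n) ℝ).mulVec u) := by
        rw [hB2, hwdef, Matrix.fromBlocks_mulVec]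
        simp only [Sum.elim_comp_inl, Sum.elim_comp_inr]
      rintro (i | i)
      · rw [hmv]
        have hsm : Mh.mulVec (fun i => s * u i) = fun i => s * (Mh.mulVec u) i := by
          have : (fun i => s * u i) = s • u := by funext i; simp [smul_eq_mul]
          rw [this, Matrix.mulVec_smul]
          funext i
          simp [smul_eq_mul]
        simp only [Sum.elim_inl, Pi.add_apply, hsm]
        exact hkey i
      · rw [hmv]
        simp [hwdef, Matrix.one_mulVec, Matrix.zero_mulVec]
    exact le_specRad_of_subsolution (itMatII P₂ R₂ S₂) hB2nn hwnn hwpos hs0 hsubs
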